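/- Let P be a semifield (an abelian multiplicative group with an addition that is commutative, associative, and distributive over multiplication), B a skew-symmetrizable integer matrix satisfying (B1) and (B2) with I = I_+ ⊔ I_−, and y_i(u) ∈ P the coefficient tuples along the bipartite mutation sequence, where mutation μ_k transforms y via y'_k = y_k^{−1}, and y'_i = y_i(1 + y_k^{−1})^{−B_{ki}} if B_{ki} ≥ 0 (i ≠ k), y'_i = y_i(1 + y_k)^{−B_{ki}} if B_{ki} ≤ 0 (i ≠ k). Then y_i(u) = y_i(u+1)^{−1} whenever ε(i)(−1)^u = +, and y_i(u) = y_i(u−1)^{−1} whenever ε(i)(−1)^u = −; moreover for each ε ∈ {+,−}, the subfamily {y_i(u) : ε(i)(−1)^u = ε} satisfies the Y-system Y_ε(B). -/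
import Mathlib


/-- Lemma 6.17: along the bipartite mutation sequence, the coefficient tuples
`y_i(u)` in a semifield `P` (a commutative multiplicative group with a commutative,
associative addition distributive over multiplication) satisfy
`y_i(u) = y_i(u+1)^{−1}` whenever `ε(i)(−1)^u = +`, `y_i(u) = y_i(u−1)^{−1}`
whenever `ε(i)(−1)^u = −`, and for each sign `ε` the subfamily
`{y_i(u) : ε(i)(−1)^u = ε}` satisfies the Y-system `Y_ε(B)` (in multiplicative
form). Here `ε(i)(−1)^u = +` is encoded by `eps i = true ↔ Even u`, the indices
mutated at step `u → u+1` are exactly those with `ε(i)(−1)^u = +`, and the exchange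
matrix at step `u` is `B` for even `u` and `−B` for odd `u`. -/
theorem coefficients_satisfy_Y_system {I P : Type*} [Fintype I] [DecidableEq I]
    [CommGroup P] (add : P → P → P)
    (haddcomm : ∀ a b, add a b = add b a)
    (haddassoc : ∀ a b c, add (add a b) c = add a (add b c))
    (hdistrib : ∀ a b c, a * add b c = add (a * b) (a * c))
    (B : I → I → ℤ) (eps : I → Bool) (d : I → ℤ) (hd : ∀ i, 0 < d i)
    (hskew : ∀ i j, d i * B i j = -(d j * B j i))
    (hB1 : ∀ i j, B i j ≠ 0 → eps i ≠ eps j)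
    (hB2 : ∀ i j, eps i = eps j →
      (∑ k ∈ Finset.univ.filter (fun k => 0 < B i k ∧ 0 < B k j), B i k * B k j) =
        ∑ k ∈ Finset.univ.filter (fun k => B i k < 0 ∧ B k j < 0), B i k * B k j)
    (y : I → ℤ → P)
    (hflip : ∀ i u, ((eps i = true) ↔ Even u) → y i (u + 1) = (y i u)⁻¹)
    (hcorr : ∀ i u, ¬((eps i = true) ↔ Even u) →
      y i (u + 1) = y i u *
        ∏ k ∈ Finset.univ.filter (fun k => (eps k = true) ↔ Even u),
          (if 0 ≤ (if Even u then B k i else -B k i) then add 1 ((y k u)⁻¹)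
            else add 1 (y k u)) ^ (-(if Even u then B k i else -B k i))) :
    (∀ i u, ((eps i = true) ↔ Even u) → y i u = (y i (u + 1))⁻¹) ∧
    (∀ i u, ¬((eps i = true) ↔ Even u) → y i u = (y i (u - 1))⁻¹) ∧
    -- the subfamily on `ε(i)(−1)^u = +` satisfies `Y_+(B)`
    (∀ i u, ¬((eps i = true) ↔ Even u) →
      (eps i = true →
        y i (u - 1) * y i (u + 1) *
            ∏ k ∈ Finset.univ.filter (fun k => B k i < 0),
              (add 1 ((y k u)⁻¹)) ^ (-(B k i)) =
          ∏ k ∈ Finset.univ.filter (fun k => 0 < B k i),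
            (add 1 (y k u)) ^ (B k i)) ∧
      (eps i = false →
        y i (u - 1) * y i (u + 1) *
            ∏ k ∈ Finset.univ.filter (fun k => 0 < B k i),
              (add 1 ((y k u)⁻¹)) ^ (B k i) =
          ∏ k ∈ Finset.univ.filter (fun k => B k i < 0),
            (add 1 (y k u)) ^ (-(B k i)))) ∧
    -- the subfamily on `ε(i)(−1)^u = −` satisfies `Y_−(B)`
    (∀ i u, ((eps i = true) ↔ Even u) →
      (eps i = true →
        y i (u - 1) * y i (u + 1) *
            ∏ k ∈ Finset.univ.filter (fun k => 0 < B k i),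
              (add 1 ((y k u)⁻¹)) ^ (B k i) =
          ∏ k ∈ Finset.univ.filter (fun k => B k i < 0),
            (add 1 (y k u)) ^ (-(B k i))) ∧
      (eps i = false →
        y i (u - 1) * y i (u + 1) *
            ∏ k ∈ Finset.univ.filter (fun k => B k i < 0),
              (add 1 ((y k u)⁻¹)) ^ (-(B k i)) =
          ∏ k ∈ Finset.univ.filter (fun k => 0 < B k i),
            (add 1 (y k u)) ^ (B k i))) := by
  -- part 1
  have part1 : ∀ i u, ((eps i = true) ↔ Even u) → y i u = (y i (u + 1))⁻¹ := by
    intro i u h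
    rw [hflip i u h, inv_inv]
  -- part 2
  have part2 : ∀ i u, ¬((eps i = true) ↔ Even u) → y i u = (y i (u - 1))⁻¹ := by
    intro i u h
    have h' : (eps i = true) ↔ Even (u - 1) := by
      rw [Int.even_sub_one]; tauto
    have hf := hflip i (u - 1) h'
    rw [show u - 1 + 1 = u by ring] at hf
    exact hf
  refine ⟨part1, part2, ?_, ?_⟩
  · -- Y_+(B): i with ¬(eps i ↔ Even u), mutated at step u
    intro i u h
    have hkey : y i (u - 1) * y i (u + 1) =
        ∏ k ∈ Finset.univ.filter (fun k => (eps k = true) ↔ Even u),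
          (if 0 ≤ (if Even u then B k i else -B k i) then add 1 ((y k u)⁻¹)
            else add 1 (y k u)) ^ (-(if Even u then B k i else -B k i)) := by
      rw [hcorr i u h, ← mul_assoc, part2 i u h, mul_inv_cancel, one_mul]
    constructor
    · intro hi
      have hu : ¬ Even u := fun he => h ⟨fun _ => he, fun _ => hi⟩
      rw [hkey]
      simp only [if_neg hu, neg_neg]
      rw [Finset.prod_filter, Finset.prod_filter, Finset.prod_filter,
        ← Finset.prod_mul_distrib]
      refine Finset.prod_congr rfl fun k _ => ?_
      rcases lt_trichotomy (B k i) 0 with hk | hk | hk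
      · have hke : eps k = false := by
          have := hB1 k i (ne_of_lt hk); rw [hi] at this; simpa using this
        have h1 : (0:ℤ) ≤ -B k i := by omega
        have h2 : ¬ (0 < B k i) := by omega
        simp only [hke, hu, hk, h1, h2, if_true, if_false, iff_false,
          Bool.false_eq_true, false_iff, not_false_iff, if_pos, if_neg, ← zpow_add,
          add_neg_cancel, zpow_zero]
      · simp [hk]
      · have hke : eps k = false := by
          have := hB1 k i (ne_of_gt hk); rw [hi] at this; simpa using this
        have h1 : ¬ ((0:ℤ) ≤ -B k i) := by omega
        have h2 : ¬ (B k i < 0) := by omega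
        simp [hke, hu, hk, h1, h2]
    · intro hi
      have hu : Even u := by
        by_contra hu
        exact h ⟨fun he => absurd he (by simp [hi]), fun he => absurd he hu⟩
      rw [hkey]
      simp only [if_pos hu]
      rw [Finset.prod_filter, Finset.prod_filter, Finset.prod_filter,
        ← Finset.prod_mul_distrib]
      refine Finset.prod_congr rfl fun k _ => ?_
      rcases lt_trichotomy (B k i) 0 with hk | hk | hk
      · have hke : eps k = true := by
          have := hB1 k i (ne_of_lt hk); rw [hi] at this; simpa using this
        have h1 : ¬ ((0:ℤ) ≤ B k i) := by omega
        have h2 : ¬ (0 < B k i) := by omega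
        simp [hke, hu, hk, h1, h2]
      · simp [hk]
      · have hke : eps k = true := by
          have := hB1 k i (ne_of_gt hk); rw [hi] at this; simpa using this
        have h1 : (0:ℤ) ≤ B k i := by omega
        have h2 : ¬ (B k i < 0) := by omega
        simp only [hke, hu, hk, h1, h2, iff_true, if_pos, if_neg, if_true, if_false,
          ← zpow_add, neg_add_cancel, zpow_zero]
  · -- Y_−(B): i with eps i ↔ Even u, not mutated at step u
    intro i u h
    have h' : ¬((eps i = true) ↔ Even (u - 1)) := by
      rw [Int.even_sub_one]; tauto
    have hc := hcorr i (u - 1) h'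
    rw [show u - 1 + 1 = u by ring] at hc
    have hkey : y i (u - 1) * y i (u + 1) =
        (∏ k ∈ Finset.univ.filter (fun k => (eps k = true) ↔ Even (u - 1)),
          (if 0 ≤ (if Even (u - 1) then B k i else -B k i) then add 1 ((y k (u - 1))⁻¹)
            else add 1 (y k (u - 1))) ^ (-(if Even (u - 1) then B k i else -B k i)))⁻¹ := by
      rw [hflip i u h, hc, mul_inv, ← mul_assoc, mul_inv_cancel, one_mul]
    have hyk : ∀ k, ((eps k = true) ↔ Even (u - 1)) → y k (u - 1) = (y k u)⁻¹ := by
      intro k hkk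
      have hf := hflip k (u - 1) hkk
      rw [show u - 1 + 1 = u by ring] at hf
      rw [hf, inv_inv]
    constructor
    · intro hi
      have hu : Even u := h.mp hi
      have hu' : ¬ Even (u - 1) := by rw [Int.even_sub_one]; simpa using hu
      rw [hkey,
        ← Finset.prod_inv_distrib]
      simp only [if_neg hu']
      rw [Finset.prod_filter, Finset.prod_filter, Finset.prod_filter,
        ← Finset.prod_mul_distrib]
      refine Finset.prod_congr rfl fun k _ => ?_
      rcases lt_trichotomy (B k i) 0 with hk | hk | hk
      · have hke : eps k = false := by
          have := hB1 k i (ne_of_lt hk); rw [hi] at this; simpa using this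
        have hcond : (eps k = true) ↔ Even (u - 1) := by simp [hke, hu']
        rw [hyk k hcond]
        have h1 : (0:ℤ) ≤ -B k i := by omega
        have h2 : ¬ (0 < B k i) := by omega
        simp [hke, hu', hk, h1, h2]
      · simp [hk]
      · have hke : eps k = false := by
          have := hB1 k i (ne_of_gt hk); rw [hi] at this; simpa using this
        have hcond : (eps k = true) ↔ Even (u - 1) := by simp [hke, hu']
        rw [hyk k hcond]
        have h1 : ¬ ((0:ℤ) ≤ -B k i) := by omega
        have h2 : ¬ (B k i < 0) := by omega
        simp only [hke, hu', hk, h1, h2, if_neg, if_pos, iff_false,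
          Bool.false_eq_true, false_iff, not_false_iff, inv_zpow, neg_neg, inv_inv,
          ← zpow_add, zpow_neg]
        simp [hu', ← zpow_add]
    · intro hi
      have hu : ¬ Even u := fun he => by simpa [hi] using h.mpr he
      have hu' : Even (u - 1) := by rw [Int.even_sub_one]; exact hu
      rw [hkey,
        ← Finset.prod_inv_distrib]
      simp only [if_pos hu']
      rw [Finset.prod_filter, Finset.prod_filter, Finset.prod_filter,
        ← Finset.prod_mul_distrib]
      refine Finset.prod_congr rfl fun k _ => ?_
      rcases lt_trichotomy (B k i) 0 with hk | hk | hk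
      · have hke : eps k = true := by
          have := hB1 k i (ne_of_lt hk); rw [hi] at this; simpa using this
        have hcond : (eps k = true) ↔ Even (u - 1) := by simp [hke, hu']
        rw [hyk k hcond]
        have h1 : ¬ ((0:ℤ) ≤ B k i) := by omega
        have h2 : ¬ (0 < B k i) := by omega
        simp [hke, hu', hk, h1, h2, ← zpow_add]
      · simp [hk]
      · have hke : eps k = true := by
          have := hB1 k i (ne_of_gt hk); rw [hi] at this; simpa using this
        have hcond : (eps k = true) ↔ Even (u - 1) := by simp [hke, hu']
        rw [hyk k hcond]
        have h1 : (0:ℤ) ≤ B k i := by omega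
        have h2 : ¬ (B k i < 0) := by omega
        simp [hke, hu', hk, h1, h2]
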